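/- Let T_m (m ≥ 1) be the edge-weighted tree with root ρ, internal vertices v_1,…,v_m each joined to ρ by an edge of length m, and leaves u_{i,j} for 1 ≤ i,j ≤ m, where u_{i,j} is joined to v_i by an edge of length 1; distances are shortest-path distances. Order the leaves as u_{1,1}, u_{2,1}, …, u_{m,1}, u_{1,2}, …, u_{m,2}, …, u_{m,m} (i.e., u_{i,j} precedes u_{i',j'} iff j < j', or j = j' and i < i'). Then for every 1 ≤ q ≤ m², every walk in T_m starting at ρ that visits the first q leaves of this order, in this order (as a subsequence of the walk), has total length at least (m+1) + (q−1)(2m+2). -/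

import Mathlib

/-- The vertex set of the tree `T_m`: root `none`, internal vertices
`some (Sum.inl i)` (the `v i`), and leaves `some (Sum.inr (i, j))`
(the `u i j`). -/
abbrev TmV (m : ℕ) := Option (Fin m ⊕ Fin m × Fin m)

/-- The branch (subtree index) of a vertex of `T_m`. -/
def tmBranch {m : ℕ} : TmV m → Option (Fin m)
  | none => none
  | some (Sum.inl i) => some i
  | some (Sum.inr p) => some p.1

/-- Distance of a vertex of `T_m` to the root: the `v i` are at distance `m`
(edge lengths `m`), the leaves `u i j` at distance `m + 1` (leaf edges of
length `1`). -/
noncomputable def tmVtr {m : ℕ} : TmV m → ℝ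
  | none => 0
  | some (Sum.inl _) => (m : ℝ)
  | some (Sum.inr _) => (m : ℝ) + 1

/-- The shortest-path metric of `T_m`. -/
noncomputable def tmDist {m : ℕ} (x y : TmV m) : ℝ :=
  if x = y then 0
  else tmVtr x + tmVtr y - (if tmBranch x = tmBranch y then 2 * (m : ℝ) else 0)

/-- The length of a walk (a finite sequence of vertices). -/
noncomputable def walkLen {V : Type} (d : V → V → ℝ) : List V → ℝ
  | [] => 0
  | [_] => 0
  | x :: y :: rest => d x y + walkLen d (y :: rest)

/-- The `k`-th (0-based) leaf in the order
`u 1 1, u 2 1, …, u m 1, u 1 2, …, u m m`. -/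
def tmLeaf (m : ℕ) (hm : 0 < m) (k : ℕ) (hk : k < m * m) : TmV m :=
  some (Sum.inr (⟨k % m, Nat.mod_lt _ hm⟩, ⟨k / m, (Nat.div_lt_iff_lt_mul hm).mpr hk⟩))

section Aux

variable {V : Type} (d : V → V → ℝ)

@[simp] lemma walkLen_nil : walkLen d ([] : List V) = 0 := rfl
@[simp] lemma walkLen_single (x : V) : walkLen d [x] = 0 := rfl
@[simp] lemma walkLen_cons_cons (x y : V) (t : List V) :
    walkLen d (x :: y :: t) = d x y + walkLen d (y :: t) := rfl

lemma walkLen_nonneg (hd : ∀ a b, 0 ≤ d a b) : ∀ l : List V, 0 ≤ walkLen d l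
  | [] => le_refl 0
  | [_] => le_refl 0
  | x :: y :: t => by
      rw [walkLen_cons_cons]
      exact add_nonneg (hd x y) (walkLen_nonneg hd (y :: t))

lemma walkLen_sublist (hd : ∀ a b, 0 ≤ d a b)
    (ht : ∀ a b c, d a c ≤ d a b + d b c) {l₁ l₂ : List V} (hs : l₁.Sublist l₂) :
    ∀ a, walkLen d (a :: l₁) ≤ walkLen d (a :: l₂) := by
  induction hs with
  | slnil => intro a; exact le_refl _
  | @cons l₁ l₂ b hs ih =>
      intro a
      have h1 : walkLen d (a :: l₁) ≤ d a b + walkLen d (b :: l₁) := by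
        cases l₁ with
        | nil => simpa using hd a b
        | cons c t =>
            rw [walkLen_cons_cons, walkLen_cons_cons]
            have := ht a b c
            linarith
      calc walkLen d (a :: l₁) ≤ d a b + walkLen d (b :: l₁) := h1
        _ ≤ d a b + walkLen d (b :: l₂) := by linarith [ih b]
        _ = walkLen d (a :: b :: l₂) := (walkLen_cons_cons d a b l₂).symm
  | @cons_cons l₁ l₂ b hs ih =>
      intro a
      rw [walkLen_cons_cons, walkLen_cons_cons]
      linarith [ih b]

end Aux

section Tm

variable {m : ℕ}

lemma tmVtr_nonneg (x : TmV m) : 0 ≤ tmVtr x := by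
  rcases x with _ | (i | p) <;> simp [tmVtr] <;> positivity

lemma tmBranch_eq_none (x : TmV m) : tmBranch x = none ↔ x = none := by
  rcases x with _ | (i | p) <;> simp [tmBranch]

lemma tmVtr_ge (x : TmV m) (hx : x ≠ none) : (m : ℝ) ≤ tmVtr x := by
  rcases x with _ | (i | p)
  · exact absurd rfl hx
  · simp [tmVtr]
  · simp [tmVtr]

lemma tm_branch_aux {x y : TmV m} (h : tmBranch x = tmBranch y) (hne : x ≠ y) :
    (m : ℝ) ≤ tmVtr x ∧ (m : ℝ) ≤ tmVtr y := by
  have hx : x ≠ none := by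
    rintro rfl
    simp only [tmBranch] at h
    exact hne ((tmBranch_eq_none y).mp h.symm).symm
  have hy : y ≠ none := by
    rintro rfl
    simp only [tmBranch] at h
    exact hne ((tmBranch_eq_none x).mp h)
  exact ⟨tmVtr_ge x hx, tmVtr_ge y hy⟩

lemma tmDist_self (x : TmV m) : tmDist x x = 0 := by simp [tmDist]

lemma tmDist_nonneg (x y : TmV m) : 0 ≤ tmDist x y := by
  unfold tmDist
  split_ifs with h1 h2
  · exact le_refl 0
  · obtain ⟨ha, hb⟩ := tm_branch_aux h2 h1
    linarith
  · linarith [tmVtr_nonneg x, tmVtr_nonneg y]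

lemma tmDist_triangle (x y z : TmV m) : tmDist x z ≤ tmDist x y + tmDist y z := by
  by_cases hxz : x = z
  · subst hxz
    rw [tmDist_self]
    linarith [tmDist_nonneg x y, tmDist_nonneg y x]
  by_cases hxy : x = y
  · subst hxy
    rw [tmDist_self]
    linarith
  by_cases hyz : y = z
  · subst hyz
    rw [tmDist_self]
    linarith
  have hxy' : tmBranch x = tmBranch y → (m : ℝ) ≤ tmVtr y :=
    fun h => (tm_branch_aux h hxy).2
  have hyz' : tmBranch y = tmBranch z → (m : ℝ) ≤ tmVtr y :=
    fun h => (tm_branch_aux h hyz).1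
  have h0 := tmVtr_nonneg y
  have hm0 : (0 : ℝ) ≤ (m : ℝ) := Nat.cast_nonneg m
  rw [tmDist, tmDist, tmDist, if_neg hxz, if_neg hxy, if_neg hyz]
  split_ifs with h1 h2 h3 h3 h2 h3 h3
  · linarith [hxy' h2]
  · linarith
  · linarith [hyz' h3]
  · linarith
  · exact absurd (h2.trans h3) h1
  · linarith [hxy' h2]
  · linarith [hyz' h3]
  · linarith

/-- Proof-free leaf function agreeing with `tmLeaf`. -/
def tmG (m : ℕ) (hm : 0 < m) (k : ℕ) : TmV m :=
  some (Sum.inr (⟨k % m, Nat.mod_lt _ hm⟩, ⟨k / m % m, Nat.mod_lt _ hm⟩))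

lemma tmLeaf_eq_tmG (hm : 0 < m) (k : ℕ) (hk : k < m * m) :
    tmLeaf m hm k hk = tmG m hm k := by
  have h : k / m < m := (Nat.div_lt_iff_lt_mul hm).mpr hk
  simp [tmLeaf, tmG, Nat.mod_eq_of_lt h]

lemma tmDist_root_leaf (hm : 0 < m) (k : ℕ) :
    tmDist (none : TmV m) (tmG m hm k) = (m : ℝ) + 1 := by
  simp [tmDist, tmG, tmBranch, tmVtr]

lemma tmDist_consec (hm : 0 < m) (hm2 : 2 ≤ m) (s : ℕ) :
    tmDist (tmG m hm s) (tmG m hm (s + 1)) = 2 * (m : ℝ) + 2 := by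
  have hb : s % m ≠ (s + 1) % m := by
    intro h
    have h1 : (s + 1) % m = (s % m + 1) % m := by
      conv_lhs => rw [← Nat.mod_add_mod]
    have hlt : s % m < m := Nat.mod_lt _ hm
    by_cases h2 : s % m + 1 < m
    · rw [h1, Nat.mod_eq_of_lt h2] at h
      omega
    · have h3 : s % m + 1 = m := by omega
      rw [h1, h3, Nat.mod_self] at h
      omega
  have hbr : tmBranch (tmG m hm s) ≠ tmBranch (tmG m hm (s + 1)) := by
    intro h
    apply hb
    simpa [tmG, tmBranch, Fin.mk.injEq] using h
  have hne : tmG m hm s ≠ tmG m hm (s + 1) := by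
    intro h
    exact hbr (congrArg tmBranch h)
  rw [tmDist, if_neg hne, if_neg hbr]
  simp only [tmG, tmVtr]
  ring

lemma tm_chain (hm : 0 < m) (hm2 : 2 ≤ m) :
    ∀ (q s : ℕ), walkLen tmDist
      (tmG m hm s :: (List.range q).map (fun k => tmG m hm (s + 1 + k)))
      = (q : ℝ) * (2 * (m : ℝ) + 2) := by
  intro q
  induction q with
  | zero => intro s; simp
  | succ n ih =>
      intro s
      rw [List.range_succ_eq_map, List.map_cons, List.map_map]
      have hmap : (List.map ((fun k => tmG m hm (s + 1 + k)) ∘ Nat.succ) (List.range n))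
          = List.map (fun k => tmG m hm (s + 1 + 1 + k)) (List.range n) := by
        apply List.map_congr_left
        intro a _
        simp only [Function.comp]
        congr 1
        omega
      rw [hmap, walkLen_cons_cons]
      have h1 : s + 1 + 0 = s + 1 := by omega
      rw [h1, ih (s + 1), tmDist_consec hm hm2 s]
      push_cast
      ring

end Tm

/-- Every walk in `T_m` starting at the root that visits the
first `q` leaves of the order `u 1 1, u 2 1, …, u m 1, u 1 2, …` in this order
(as a subsequence of the walk) has total length at least
`(m+1) + (q-1)(2m+2)`. -/
theorem tm_walk_lower_bound (m q : ℕ) (hm : 1 ≤ m) (hq1 : 1 ≤ q) (hq : q ≤ m * m)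
    (w : List (TmV m)) (hstart : w.head? = some (none : TmV m))
    (hvisit : ((List.range q).pmap (fun k hk => tmLeaf m hm k hk)
        (fun k hk => lt_of_lt_of_le (List.mem_range.mp hk) hq)).Sublist w) :
    ((m : ℝ) + 1) + ((q : ℝ) - 1) * (2 * (m : ℝ) + 2) ≤ walkLen tmDist w := by
  have hL : (List.range q).pmap (fun k hk => tmLeaf m hm k hk)
      (fun k hk => lt_of_lt_of_le (List.mem_range.mp hk) hq)
      = (List.range q).map (tmG m hm) := by
    have h1 := List.pmap_congr_left (p := fun k => k < m * m) (q := fun k => k < m * m)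
        (f := fun k hk => tmLeaf m hm k hk) (g := fun k _ => tmG m hm k) (List.range q)
        (H₁ := fun k hk => lt_of_lt_of_le (List.mem_range.mp hk) hq)
        (H₂ := fun k hk => lt_of_lt_of_le (List.mem_range.mp hk) hq)
        (fun k _ h h' => tmLeaf_eq_tmG hm k h)
    rw [h1, List.pmap_eq_map]
  rw [hL] at hvisit
  obtain ⟨q₀, rfl⟩ : ∃ q₀, q = q₀ + 1 := ⟨q - 1, by omega⟩
  have hLsplit : (List.range (q₀ + 1)).map (tmG m hm)
      = tmG m hm 0 :: (List.range q₀).map (fun k => tmG m hm (0 + 1 + k)) := by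
    rw [List.range_succ_eq_map, List.map_cons, List.map_map]
    congr 1
    apply List.map_congr_left
    intro a _
    simp only [Function.comp]
    congr 1
    omega
  cases w with
  | nil => simp at hstart
  | cons a w₀ =>
    simp only [List.head?_cons, Option.some.injEq] at hstart
    subst hstart
    have hsub : ((List.range (q₀ + 1)).map (tmG m hm)).Sublist w₀ := by
      rcases List.sublist_cons_iff.mp hvisit with h | ⟨r, hr, _⟩
      · exact h
      · rw [hLsplit] at hr
        exact absurd (List.cons.injEq _ _ _ _ ▸ hr).1 (by simp [tmG])
    have hle := walkLen_sublist tmDist tmDist_nonneg tmDist_triangle hsub none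
    refine le_trans ?_ hle
    rw [hLsplit, walkLen_cons_cons, tmDist_root_leaf hm 0]
    rcases Nat.eq_zero_or_pos q₀ with hq0 | hq0
    · subst hq0
      simp only [List.range_zero, List.map_nil, walkLen_single]
      push_cast
      ring_nf
      simp
    · have hm2 : 2 ≤ m := by
        by_contra h
        push_neg at h
        interval_cases m <;> omega
      rw [tm_chain hm hm2 q₀ 0]
      push_cast
      linarith
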